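/- If G ∈ 𝓕 has order n, then there exists a double Roman dominating function f of G with weight ω(f) ≤ 12n/11; in particular γ_dR(G) ≤ 12n/11. -/

import Mathlib

/-- A double Roman dominating function on a simple graph `G`:
values in `{0,1,2,3}`, every vertex with value `0` has two neighbors with value `2`
or one neighbor with value `3`, and every vertex with value `1` has a neighbor with
value at least `2`. -/
def IsDRDF {V : Type*} (G : SimpleGraph V) (f : V → ℕ) : Prop :=
  (∀ v, f v ≤ 3) ∧
  (∀ v, f v = 0 →
    (∃ u w, u ≠ w ∧ G.Adj v u ∧ G.Adj v w ∧ f u = 2 ∧ f w = 2) ∨ ∃ u, G.Adj v u ∧ f u = 3) ∧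
  (∀ v, f v = 1 → ∃ u, G.Adj v u ∧ 2 ≤ f u)

/-- The double Roman domination number: the minimum weight of a DRDF. -/
noncomputable def gammaDR {V : Type*} [Fintype V] (G : SimpleGraph V) : ℕ :=
  sInf {w | ∃ f, IsDRDF G f ∧ ∑ v, f v = w}

/-- Lift a family of relations to a relation on the sigma type (relating only elements
with the same index). -/
def sigmaRel {ι : Type} {α : ι → Type} (R : ∀ i, α i → α i → Prop) :
    (Σ i, α i) → (Σ i, α i) → Prop :=
  fun a b => ∃ h : a.1 = b.1, R b.1 (h ▸ a.2) b.2

/-- Base relation for the subdivision of a loopless multigraph with vertex type `V`,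
edge type `E` and endpoint maps `e₁ e₂ : E → V`, where the edge `e` is subdivided
`cnt e` times (i.e. replaced by a path through `cnt e` new internal vertices). -/
def subdivR {V E : Type} (e₁ e₂ : E → V) (cnt : E → ℕ) :
    (V ⊕ Σ e : E, Fin (cnt e)) → (V ⊕ Σ e : E, Fin (cnt e)) → Prop
  | .inl v, .inr ⟨e, i⟩ => (v = e₁ e ∧ i.val = 0) ∨ (v = e₂ e ∧ i.val + 1 = cnt e)
  | .inr a, .inr b => sigmaRel (fun _ i j => i.val + 1 = j.val) a b
  | _, _ => False

/-- The simple graph obtained from a loopless multigraph (vertex type `V`, edge type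
`E`, endpoints `e₁ e, e₂ e`) by subdividing each edge `e` exactly `cnt e` times. -/
def subdivG {V E : Type} (e₁ e₂ : E → V) (cnt : E → ℕ) :
    SimpleGraph (V ⊕ Σ e : E, Fin (cnt e)) :=
  SimpleGraph.fromRel (subdivR e₁ e₂ cnt)

/-! ### Auxiliary definitions for the proof -/

/-- Pattern on internal path vertices when all original vertices get value `2`:
value `2` at odd positions, `0` at even positions. -/
def pat2 (_c i : ℕ) : ℕ := if i % 2 = 1 then 2 else 0

/-- Pattern on internal path vertices when all original vertices get value `3`:
value `3` at positions `≡ 2 (mod 3)` (except the last one when `3 ∣ c`, which is `0`;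
then position `c - 2` gets value `2` instead). -/
def pat3 (c i : ℕ) : ℕ :=
  if i % 3 = 2 ∧ ¬(c % 3 = 0 ∧ i = c - 1) then 3
  else if c % 3 = 0 ∧ i = c - 2 then 2 else 0

/-- The DRDF candidate: value `a` on original vertices, pattern `pat` on
subdivision vertices. -/
def fpat {V E : Type} (cnt : E → ℕ) (a : ℕ) (pat : ℕ → ℕ → ℕ) :
    (V ⊕ Σ e : E, Fin (cnt e)) → ℕ
  | .inl _ => a
  | .inr ⟨e, i⟩ => pat (cnt e) i.val

section AdjLemmas

variable {V E : Type} (e₁ e₂ : E → V) (cnt : E → ℕ)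

lemma subdiv_adj_left (e : E) (i : Fin (cnt e)) (h : i.val = 0) :
    (subdivG e₁ e₂ cnt).Adj (Sum.inr ⟨e, i⟩) (Sum.inl (e₁ e)) := by
  refine ⟨by simp, Or.inr ?_⟩
  exact Or.inl ⟨rfl, h⟩

lemma subdiv_adj_right (e : E) (i : Fin (cnt e)) (h : i.val + 1 = cnt e) :
    (subdivG e₁ e₂ cnt).Adj (Sum.inr ⟨e, i⟩) (Sum.inl (e₂ e)) := by
  refine ⟨by simp, Or.inr ?_⟩
  exact Or.inr ⟨rfl, h⟩

lemma subdiv_adj_succ (e : E) (i j : Fin (cnt e)) (h : i.val + 1 = j.val) :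
    (subdivG e₁ e₂ cnt).Adj (Sum.inr ⟨e, i⟩) (Sum.inr ⟨e, j⟩) := by
  refine ⟨?_, Or.inl ⟨rfl, h⟩⟩
  intro hh
  have h2 := Sum.inr.inj hh
  have h4 : i = j := by injection h2 with h3 h4
  rw [h4] at h
  omega

lemma subdiv_adj_pred (e : E) (i j : Fin (cnt e)) (h : j.val + 1 = i.val) :
    (subdivG e₁ e₂ cnt).Adj (Sum.inr ⟨e, i⟩) (Sum.inr ⟨e, j⟩) :=
  ((subdivG e₁ e₂ cnt).adj_symm (subdiv_adj_succ e₁ e₂ cnt e j i h))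

end AdjLemmas

section DRDF

variable {V E : Type} (e₁ e₂ : E → V) (cnt : E → ℕ)

lemma isDRDF_fpat2 (hloop : ∀ e, e₁ e ≠ e₂ e) (hcnt : ∀ e, 1 ≤ cnt e) :
    IsDRDF (subdivG e₁ e₂ cnt) (fpat cnt 2 pat2) := by
  refine ⟨?_, ?_, ?_⟩
  · rintro (v | ⟨e, i⟩)
    · simp [fpat]
    · simp only [fpat, pat2]
      split <;> omega
  · rintro (v | ⟨e, i⟩) h0
    · simp [fpat] at h0
    · -- subdivision vertex with value 0 : i.val is even
      left
      have hev : i.val % 2 = 0 := by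
        simp only [fpat, pat2] at h0
        split at h0 <;> omega
      have hic : i.val < cnt e := i.isLt
      by_cases hi0 : i.val = 0
      · by_cases hc1 : cnt e = 1
        · refine ⟨Sum.inl (e₁ e), Sum.inl (e₂ e), by simpa using hloop e, ?_, ?_, rfl, rfl⟩
          · exact subdiv_adj_left e₁ e₂ cnt e i hi0
          · exact subdiv_adj_right e₁ e₂ cnt e i (by omega)
        · have h1c : 1 < cnt e := by have := hcnt e; omega
          refine ⟨Sum.inl (e₁ e), Sum.inr ⟨e, ⟨1, h1c⟩⟩, by simp, ?_, ?_, rfl, ?_⟩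
          · exact subdiv_adj_left e₁ e₂ cnt e i hi0
          · exact subdiv_adj_succ e₁ e₂ cnt e i ⟨1, h1c⟩ (by show i.val + 1 = 1; omega)
          · simp [fpat, pat2]
      · -- i.val ≥ 2, even
        have hi2 : 2 ≤ i.val := by omega
        by_cases hlast : i.val + 1 = cnt e
        · refine ⟨Sum.inr ⟨e, ⟨i.val - 1, by omega⟩⟩, Sum.inl (e₂ e), by simp, ?_, ?_, ?_, rfl⟩
          · exact subdiv_adj_pred e₁ e₂ cnt e i _ (by show i.val - 1 + 1 = i.val; omega)
          · exact subdiv_adj_right e₁ e₂ cnt e i hlast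
          · simp only [fpat, pat2]
            have h' : (i.val - 1) % 2 = 1 := by omega
            simp [h']
        · refine ⟨Sum.inr ⟨e, ⟨i.val - 1, by omega⟩⟩, Sum.inr ⟨e, ⟨i.val + 1, by omega⟩⟩,
            ?_, ?_, ?_, ?_, ?_⟩
          · intro hh
            have h2 := Sum.inr.inj hh
            have h4 : (⟨i.val - 1, by omega⟩ : Fin (cnt e)) = ⟨i.val + 1, by omega⟩ := by
              injection h2 with h3 h4
            have h5 : i.val - 1 = i.val + 1 := congrArg Fin.val h4
            omega
          · exact subdiv_adj_pred e₁ e₂ cnt e i _ (by show i.val - 1 + 1 = i.val; omega)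
          · exact subdiv_adj_succ e₁ e₂ cnt e i _ (by show i.val + 1 = i.val + 1; rfl)
          · simp only [fpat, pat2]
            have h' : (i.val - 1) % 2 = 1 := by omega
            simp [h']
          · simp only [fpat, pat2]
            have h' : (i.val + 1) % 2 = 1 := by omega
            simp [h']
  · rintro (v | ⟨e, i⟩) h1
    · simp [fpat] at h1
    · simp only [fpat, pat2] at h1
      split at h1 <;> omega

lemma isDRDF_fpat3 (hloop : ∀ e, e₁ e ≠ e₂ e) (hcnt : ∀ e, 1 ≤ cnt e) :
    IsDRDF (subdivG e₁ e₂ cnt) (fpat cnt 3 pat3) := by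
  refine ⟨?_, ?_, ?_⟩
  · rintro (v | ⟨e, i⟩)
    · simp [fpat]
    · simp only [fpat, pat3]
      split
      · omega
      · split <;> omega
  · rintro (v | ⟨e, i⟩) h0
    · simp [fpat] at h0
    · right
      have hic : i.val < cnt e := i.isLt
      have hcc : 1 ≤ cnt e := hcnt e
      -- from h0 extract the two negations
      have hneg : ¬(i.val % 3 = 2 ∧ ¬(cnt e % 3 = 0 ∧ i.val = cnt e - 1)) ∧
          ¬(cnt e % 3 = 0 ∧ i.val = cnt e - 2) := by
        simp only [fpat, pat3] at h0
        constructor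
        · intro hh; rw [if_pos hh] at h0; omega
        · intro hh
          by_cases h' : i.val % 3 = 2 ∧ ¬(cnt e % 3 = 0 ∧ i.val = cnt e - 1)
          · rw [if_pos h'] at h0; omega
          · rw [if_neg h', if_pos hh] at h0; omega
      obtain ⟨hA, hB⟩ := hneg
      rcases (by omega : i.val % 3 = 0 ∨ i.val % 3 = 1 ∨ i.val % 3 = 2) with h3 | h3 | h3
      · -- i ≡ 0 (mod 3)
        by_cases hi0 : i.val = 0
        · exact ⟨Sum.inl (e₁ e), subdiv_adj_left e₁ e₂ cnt e i hi0, rfl⟩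
        · have hi3 : 3 ≤ i.val := by omega
          refine ⟨Sum.inr ⟨e, ⟨i.val - 1, by omega⟩⟩,
            subdiv_adj_pred e₁ e₂ cnt e i _ (by show i.val - 1 + 1 = i.val; omega), ?_⟩
          simp only [fpat, pat3]
          rw [if_pos]
          exact ⟨by omega, fun ⟨_, hh⟩ => by omega⟩
      · -- i ≡ 1 (mod 3)
        by_cases hlast : i.val + 1 = cnt e
        · exact ⟨Sum.inl (e₂ e), subdiv_adj_right e₁ e₂ cnt e i hlast, rfl⟩
        · have hlt : i.val + 1 < cnt e := by omega
          refine ⟨Sum.inr ⟨e, ⟨i.val + 1, hlt⟩⟩,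
            subdiv_adj_succ e₁ e₂ cnt e i _ rfl, ?_⟩
          simp only [fpat, pat3]
          rw [if_pos]
          refine ⟨by omega, ?_⟩
          rintro ⟨hc3, hh⟩
          exact hB ⟨hc3, by omega⟩
      · -- i ≡ 2 (mod 3): value 0 forces 3 ∣ c and i = c - 1
        have hkey : cnt e % 3 = 0 ∧ i.val = cnt e - 1 := by
          by_contra hh
          exact hA ⟨h3, hh⟩
        exact ⟨Sum.inl (e₂ e), subdiv_adj_right e₁ e₂ cnt e i (by omega), rfl⟩
  · rintro (v | ⟨e, i⟩) h1
    · simp [fpat] at h1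
    · simp only [fpat, pat3] at h1
      split at h1
      · omega
      · split at h1 <;> omega

end DRDF

/-- The key per-edge numeric inequality. -/
lemma key_ineq (c : ℕ) (h1 : 1 ≤ c) (h10 : c ≤ 10) :
    12 + 3 * (∑ i ∈ Finset.range c, pat2 c i) + 8 * (∑ i ∈ Finset.range c, pat3 c i)
      ≤ 12 * c := by
  interval_cases c <;> decide

theorem gammaDR_of_mem_F {V E : Type} [Fintype V] [Fintype E]
    (e₁ e₂ : E → V) (cnt : E → ℕ)
    (hloop : ∀ e, e₁ e ≠ e₂ e)
    (hcnt : ∀ e, 1 ≤ cnt e ∧ cnt e ≤ 10)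
    (hdeg : ∀ v : V, 3 ≤ {e | e₁ e = v ∨ e₂ e = v}.ncard)
    (hconn : (subdivG e₁ e₂ cnt).Connected) :
    (∃ f, IsDRDF (subdivG e₁ e₂ cnt) f ∧
        ((∑ v, f v : ℕ) : ℚ) ≤ 12 * (Fintype.card (V ⊕ Σ e : E, Fin (cnt e))) / 11) ∧
      (gammaDR (subdivG e₁ e₂ cnt) : ℚ) ≤
        12 * (Fintype.card (V ⊕ Σ e : E, Fin (cnt e))) / 11 := by
  classical
  set m := Fintype.card V with hm
  set k := Fintype.card E with hk
  set C := ∑ e : E, cnt e with hC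
  set A := ∑ e : E, ∑ i ∈ Finset.range (cnt e), pat2 (cnt e) i with hA
  set B := ∑ e : E, ∑ i ∈ Finset.range (cnt e), pat3 (cnt e) i with hB
  -- cardinality of the vertex set
  have hcard : Fintype.card (V ⊕ Σ e : E, Fin (cnt e)) = m + C := by
    rw [Fintype.card_sum, Fintype.card_sigma]
    simp [hC, hm]
  -- handshake: 3 * m ≤ 2 * k
  have hhand : 3 * m ≤ 2 * k := by
    have hdeg' : ∀ v : V, 3 ≤ (Finset.univ.filter (fun e => e₁ e = v ∨ e₂ e = v)).card := by
      intro v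
      have := hdeg v
      rwa [Set.ncard_eq_toFinset_card', Set.toFinset_setOf] at this
    have hsum : ∑ v : V, (Finset.univ.filter (fun e => e₁ e = v ∨ e₂ e = v)).card = 2 * k := by
      have : ∀ v : V, (Finset.univ.filter (fun e => e₁ e = v ∨ e₂ e = v)).card
          = ∑ e : E, (if e₁ e = v ∨ e₂ e = v then 1 else 0) := by
        intro v; rw [Finset.card_filter]
      simp_rw [this]
      rw [Finset.sum_comm]
      have h2 : ∀ e : E, ∑ v : V, (if e₁ e = v ∨ e₂ e = v then 1 else 0) = 2 := by
        intro e
        have : ∑ v : V, (if e₁ e = v ∨ e₂ e = v then 1 else 0)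
            = (Finset.univ.filter (fun v => e₁ e = v ∨ e₂ e = v)).card := by
          rw [Finset.card_filter]
        rw [this]
        have hset : Finset.univ.filter (fun v => e₁ e = v ∨ e₂ e = v) = {e₁ e, e₂ e} := by
          ext v
          simp [eq_comm]
        rw [hset, Finset.card_pair (hloop e)]
      simp_rw [h2]
      simp [hk, mul_comm]
    calc 3 * m = ∑ _v : V, 3 := by simp [hm, mul_comm]
    _ ≤ ∑ v : V, (Finset.univ.filter (fun e => e₁ e = v ∨ e₂ e = v)).card :=
        Finset.sum_le_sum fun v _ => hdeg' v
    _ = 2 * k := hsum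
  -- per-edge inequality summed
  have hkey : 12 * k + 3 * A + 8 * B ≤ 12 * C := by
    have : ∀ e : E, 12 + 3 * (∑ i ∈ Finset.range (cnt e), pat2 (cnt e) i)
        + 8 * (∑ i ∈ Finset.range (cnt e), pat3 (cnt e) i) ≤ 12 * cnt e := fun e =>
      key_ineq (cnt e) (hcnt e).1 (hcnt e).2
    calc 12 * k + 3 * A + 8 * B
        = ∑ e : E, (12 + 3 * (∑ i ∈ Finset.range (cnt e), pat2 (cnt e) i)
          + 8 * (∑ i ∈ Finset.range (cnt e), pat3 (cnt e) i)) := by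
          rw [Finset.sum_add_distrib, Finset.sum_add_distrib, ← Finset.mul_sum,
            ← Finset.mul_sum]
          simp [hA, hB, hk, mul_comm]
    _ ≤ ∑ e : E, 12 * cnt e := Finset.sum_le_sum fun e _ => this e
    _ = 12 * C := by rw [← Finset.mul_sum]
  -- weight of the two candidate functions
  have hw : ∀ (a : ℕ) (pat : ℕ → ℕ → ℕ),
      ∑ x : V ⊕ Σ e : E, Fin (cnt e), fpat cnt a pat x
        = a * m + ∑ e : E, ∑ i ∈ Finset.range (cnt e), pat (cnt e) i := by
    intro a pat
    rw [Fintype.sum_sum_type]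
    congr 1
    · simp [fpat, hm, mul_comm]
    · rw [← Finset.univ_sigma_univ, Finset.sum_sigma]
      refine Finset.sum_congr rfl fun e _ => ?_
      rw [← Fin.sum_univ_eq_sum_range (fun i => pat (cnt e) i) (cnt e)]
      rfl
  -- choose the better of the two
  have hmain : ∃ f, IsDRDF (subdivG e₁ e₂ cnt) f ∧
      11 * (∑ x, f x) ≤ 12 * (m + C) := by
    by_cases hcase : 10 * m + 11 * A ≤ 12 * C
    · refine ⟨fpat cnt 2 pat2, isDRDF_fpat2 e₁ e₂ cnt hloop (fun e => (hcnt e).1), ?_⟩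
      rw [hw 2 pat2]
      omega
    · refine ⟨fpat cnt 3 pat3, isDRDF_fpat3 e₁ e₂ cnt hloop (fun e => (hcnt e).1), ?_⟩
      rw [hw 3 pat3]
      omega
  obtain ⟨f, hf, hwle⟩ := hmain
  have hineq : ((∑ x, f x : ℕ) : ℚ)
      ≤ 12 * (Fintype.card (V ⊕ Σ e : E, Fin (cnt e))) / 11 := by
    rw [le_div_iff₀ (by norm_num : (0:ℚ) < 11), hcard]
    have : ((∑ x, f x : ℕ) : ℚ) * 11 = ((11 * ∑ x, f x : ℕ) : ℚ) := by push_cast; ring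
    rw [this]
    have : (12 : ℚ) * ((m + C : ℕ) : ℚ) = ((12 * (m + C) : ℕ) : ℚ) := by push_cast; ring
    rw [show ((m + C : ℕ) : ℚ) = (((m : ℕ) : ℚ) + ((C : ℕ) : ℚ)) by push_cast; ring] at this
    push_cast
    exact_mod_cast (by exact_mod_cast hwle : ((11 * ∑ x, f x : ℕ) : ℚ) ≤ ((12 * (m + C) : ℕ) : ℚ))
  refine ⟨⟨f, hf, hineq⟩, ?_⟩
  have hg : gammaDR (subdivG e₁ e₂ cnt) ≤ ∑ x, f x :=
    Nat.sInf_le ⟨f, hf, rfl⟩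
  exact le_trans (by exact_mod_cast hg) hineq
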